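/- For n ≥ 3, the poly-Cauchy numbers with index -1 satisfy c_n^{(-1)} + (n-2) c_{n-1}^{(-1)} = 0, and for n ≥ 4 those with index -2 satisfy c_n^{(-2)} + (2n-5) c_{n-1}^{(-2)} + (n-3)^2 c_{n-2}^{(-2)} = 0. -/
import Mathlib


open Finset

/-- Unsigned Stirling numbers of the first kind. -/
def stirling1 : ℕ → ℕ → ℕ
  | 0, 0 => 1
  | 0, _ + 1 => 0
  | _ + 1, 0 => 0
  | n + 1, k + 1 => n * stirling1 n (k + 1) + stirling1 n k

/-- Stirling numbers of the second kind. -/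
def stirling2 : ℕ → ℕ → ℕ
  | 0, 0 => 1
  | 0, _ + 1 => 0
  | _ + 1, 0 => 0
  | n + 1, k + 1 => (k + 1) * stirling2 n (k + 1) + stirling2 n k

/-- Unsigned r-Stirling numbers of the first kind. -/
def rStirling1 (r : ℕ) : ℕ → ℕ → ℕ
  | 0, m => if r = 0 ∧ m = 0 then 1 else 0
  | n + 1, m =>
    if n + 1 < r then 0
    else if n + 1 = r then (if m = r then 1 else 0)
    else n * rStirling1 r n m + (match m with | 0 => 0 | m' + 1 => rStirling1 r n m')

/-- r-Stirling numbers of the second kind. -/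
def rStirling2 (r : ℕ) : ℕ → ℕ → ℕ
  | 0, m => if r = 0 ∧ m = 0 then 1 else 0
  | n + 1, m =>
    if n + 1 < r then 0
    else if n + 1 = r then (if m = r then 1 else 0)
    else m * rStirling2 r n m + (match m with | 0 => 0 | m' + 1 => rStirling2 r n m')

/-- Poly-Cauchy numbers of the first kind `c_n^{(k)}`. -/
noncomputable def polyCauchy (k : ℤ) (n : ℕ) : ℝ :=
  ∑ ℓ ∈ range (n + 1), (-1 : ℝ) ^ (n - ℓ) * stirling1 n ℓ / ((ℓ : ℝ) + 1) ^ k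

/-- Poly-Cauchy numbers of the second kind `ĉ_n^{(k)}`. -/
noncomputable def polyCauchy2 (k : ℤ) (n : ℕ) : ℝ :=
  (-1 : ℝ) ^ n * ∑ ℓ ∈ range (n + 1), (stirling1 n ℓ : ℝ) / ((ℓ : ℝ) + 1) ^ k

/-- Poly-Cauchy polynomials of the first kind `c_n^{(k)}(z)`. -/
noncomputable def polyCauchyPoly (k : ℤ) (n : ℕ) (z : ℝ) : ℝ :=
  ∑ m ∈ range (n + 1), (stirling1 n m : ℝ) * (-1 : ℝ) ^ (n - m) *
    ∑ i ∈ range (m + 1), (m.choose i : ℝ) * z ^ (m - i) / ((i : ℝ) + 1) ^ k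

/-- Shifted poly-Cauchy numbers of the first kind `c_{n,α}^{(k)}`. -/
noncomputable def shiftedPolyCauchy (k : ℤ) (n : ℕ) (α : ℝ) : ℝ :=
  ∑ m ∈ range (n + 1), (stirling1 n m : ℝ) * (-1 : ℝ) ^ (n - m) / ((m : ℝ) + α) ^ k

/-- Shifted poly-Cauchy numbers of the second kind `ĉ_{n,α}^{(k)}`. -/
noncomputable def shiftedPolyCauchy2 (k : ℤ) (n : ℕ) (α : ℝ) : ℝ :=
  (-1 : ℝ) ^ n * ∑ m ∈ range (n + 1), (stirling1 n m : ℝ) / ((m : ℝ) + α) ^ k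


/-! ### Auxiliary lemmas -/

lemma stirling1_eq_zero_of_lt : ∀ n k, n < k → stirling1 n k = 0
  | 0, _+1, _ => rfl
  | n+1, k+1, h => by
    have h' : n < k := Nat.lt_of_succ_lt_succ h
    show n * stirling1 n (k+1) + stirling1 n k = 0
    rw [stirling1_eq_zero_of_lt n (k+1) (h'.trans (Nat.lt_succ_self k)),
      stirling1_eq_zero_of_lt n k h']
    simp

/-- The signed Stirling sum with weight `w`. -/
noncomputable def Saux (n : ℕ) (w : ℕ → ℝ) : ℝ :=
  ∑ ℓ ∈ range (n + 1), (-1 : ℝ) ^ (n - ℓ) * (stirling1 n ℓ : ℝ) * w ℓ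

lemma Saux_shift (m : ℕ) (w : ℕ → ℝ) :
    ∑ ℓ ∈ range (m + 2), (-1 : ℝ) ^ (m + 1 - ℓ) * (stirling1 (m+1) (ℓ+1) : ℝ) * w (ℓ+1)
      = - Saux (m+1) w := by
  have hrhs : Saux (m+1) w
      = ∑ ℓ ∈ range (m+1), (-1:ℝ) ^ (m + 1 - (ℓ+1)) * (stirling1 (m+1) (ℓ+1) : ℝ) * w (ℓ+1) := by
    rw [Saux, Finset.sum_range_succ']
    have h0 : stirling1 (m+1) 0 = 0 := rfl
    rw [h0]
    push_cast
    ring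
  rw [Finset.sum_range_succ, stirling1_eq_zero_of_lt (m+1) (m+1+1) (Nat.lt_succ_self _), hrhs]
  push_cast
  rw [mul_zero, zero_mul, add_zero, ← Finset.sum_neg_distrib]
  refine Finset.sum_congr rfl fun ℓ hℓ => ?_
  have hℓ' : ℓ ≤ m := Nat.lt_succ_iff.mp (Finset.mem_range.mp hℓ)
  rw [show m + 1 - ℓ = (m - ℓ) + 1 by omega, pow_succ]
  ring

lemma Saux_succ (m : ℕ) (w : ℕ → ℝ) :
    Saux (m+2) w = -((m:ℝ)+1) * Saux (m+1) w + Saux (m+1) (fun ℓ => w (ℓ+1)) := by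
  have key := Saux_shift m w
  have hlhs : Saux (m+2) w
      = ∑ ℓ ∈ range (m+2), (-1:ℝ) ^ (m + 2 - (ℓ+1)) * (stirling1 (m+2) (ℓ+1) : ℝ) * w (ℓ+1) := by
    rw [Saux, Finset.sum_range_succ']
    have h0 : stirling1 (m+2) 0 = 0 := rfl
    rw [h0]
    push_cast
    ring
  rw [hlhs]
  have hterm : ∀ ℓ ∈ range (m+2),
      (-1:ℝ) ^ (m + 2 - (ℓ+1)) * (stirling1 (m+2) (ℓ+1) : ℝ) * w (ℓ+1)
        = ((m:ℝ)+1) * ((-1:ℝ) ^ (m + 1 - ℓ) * (stirling1 (m+1) (ℓ+1) : ℝ) * w (ℓ+1))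
          + (-1:ℝ) ^ (m + 1 - ℓ) * (stirling1 (m+1) ℓ : ℝ) * w (ℓ+1) := by
    intro ℓ hℓ
    have h1 : m + 2 - (ℓ + 1) = m + 1 - ℓ := by omega
    have h2 : stirling1 (m+2) (ℓ+1) = (m+1) * stirling1 (m+1) (ℓ+1) + stirling1 (m+1) ℓ := rfl
    rw [h1, h2]
    push_cast
    ring
  rw [Finset.sum_congr rfl hterm, Finset.sum_add_distrib, ← Finset.mul_sum, key]
  have hS : (∑ ℓ ∈ range (m+2), (-1:ℝ) ^ (m + 1 - ℓ) * (stirling1 (m+1) ℓ : ℝ) * w (ℓ+1))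
      = Saux (m+1) (fun ℓ => w (ℓ+1)) := rfl
  rw [hS]
  ring

lemma Saux_one : ∀ m : ℕ, Saux (m+2) (fun _ => 1) = 0
  | 0 => by
    show ∑ ℓ ∈ range 3, (-1:ℝ) ^ (2 - ℓ) * (stirling1 2 ℓ : ℝ) * 1 = 0
    rw [Finset.sum_range_succ, Finset.sum_range_succ, Finset.sum_range_succ,
      Finset.sum_range_zero]
    norm_num [stirling1]
  | m+1 => by
    rw [Saux_succ (m+1) (fun _ => 1)]
    have h1 := Saux_one m
    simp only [h1]
    ring

lemma pc1 (n : ℕ) : polyCauchy (-1) n = Saux n (fun ℓ => (ℓ:ℝ)+1) := by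
  unfold polyCauchy Saux
  refine Finset.sum_congr rfl fun ℓ _ => ?_
  rw [zpow_neg, zpow_one, div_eq_mul_inv, inv_inv]

lemma pc2 (n : ℕ) : polyCauchy (-2) n = Saux n (fun ℓ => ((ℓ:ℝ)+1)^2) := by
  unfold polyCauchy Saux
  refine Finset.sum_congr rfl fun ℓ _ => ?_
  have h : ((ℓ:ℝ)+1) ^ (-2:ℤ) = (((ℓ:ℝ)+1)^2)⁻¹ := by
    rw [show (-2:ℤ) = -(2:ℤ) by norm_num, zpow_neg, show ((2:ℤ)) = ((2:ℕ):ℤ) by norm_num,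
      zpow_natCast]
  rw [h, div_eq_mul_inv, inv_inv]

lemma rec1 (m : ℕ) : polyCauchy (-1) (m+3) = -((m:ℝ)+1) * polyCauchy (-1) (m+2) := by
  rw [pc1, pc1, show m+3 = (m+1)+2 from rfl, Saux_succ (m+1) (fun ℓ => (ℓ:ℝ)+1)]
  have hs : Saux (m+2) (fun ℓ => ((ℓ+1:ℕ):ℝ)+1)
      = Saux (m+2) (fun ℓ => (ℓ:ℝ)+1) + Saux (m+2) (fun _ => 1) := by
    unfold Saux
    rw [← Finset.sum_add_distrib]
    refine Finset.sum_congr rfl fun ℓ _ => ?_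
    push_cast
    ring
  rw [hs, Saux_one m]
  push_cast
  ring

lemma rec2 (m : ℕ) : polyCauchy (-2) (m+3)
    = -((m:ℝ)+1) * polyCauchy (-2) (m+2) + 2 * polyCauchy (-1) (m+2) := by
  rw [pc2, pc2, pc1, show m+3 = (m+1)+2 from rfl, Saux_succ (m+1) (fun ℓ => ((ℓ:ℝ)+1)^2)]
  have hs : Saux (m+2) (fun ℓ => (((ℓ+1:ℕ):ℝ)+1)^2)
      = Saux (m+2) (fun ℓ => ((ℓ:ℝ)+1)^2) + 2 * Saux (m+2) (fun ℓ => (ℓ:ℝ)+1)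
        + Saux (m+2) (fun _ => 1) := by
    unfold Saux
    rw [Finset.mul_sum, ← Finset.sum_add_distrib, ← Finset.sum_add_distrib]
    refine Finset.sum_congr rfl fun ℓ _ => ?_
    push_cast
    ring
  rw [hs, Saux_one m]
  push_cast
  ring

theorem stmt18 (n : ℕ) :
    (3 ≤ n → polyCauchy (-1) n + ((n : ℝ) - 2) * polyCauchy (-1) (n - 1) = 0) ∧
    (4 ≤ n → polyCauchy (-2) n + (2 * (n : ℝ) - 5) * polyCauchy (-2) (n - 1) +
      ((n : ℝ) - 3) ^ 2 * polyCauchy (-2) (n - 2) = 0) := by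
  constructor
  · intro h3
    obtain ⟨m, rfl⟩ : ∃ m, n = m + 3 := ⟨n - 3, by omega⟩
    have h := rec1 m
    have : m + 3 - 1 = m + 2 := rfl
    rw [this]
    push_cast
    linear_combination h
  · intro h4
    obtain ⟨m, rfl⟩ : ∃ m, n = m + 4 := ⟨n - 4, by omega⟩
    have h1 := rec2 (m+1)
    have h2 := rec2 m
    have h3 := rec1 m
    have e1 : m + 4 - 1 = m + 3 := rfl
    have e2 : m + 4 - 2 = m + 2 := rfl
    have e3 : m + 1 + 3 = m + 4 := rfl
    have e4 : m + 1 + 2 = m + 3 := rfl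
    rw [e1, e2]
    rw [e3, e4] at h1
    push_cast at h1 h2 h3 ⊢
    linear_combination h1 + ((m:ℝ)+1) * h2 + 2 * h3
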